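/- For every θ ∈ ℝ⁴ × (0,∞)⁴, the matrix f_Σ(θ) of the hidden variable model parameterization is symmetric positive definite. -/

import Mathlib

open Matrix

/-- The covariance parameterization of the hidden variable model
`X₁, X₂ → H → X₃, X₄` (with `Var[H | X₁,X₂] = 1`). -/
noncomputable def fSigma (b w : Fin 4 → ℝ) : Matrix (Fin 4) (Fin 4) ℝ :=
  let q : ℝ := (b 0) ^ 2 * w 0 + (b 1) ^ 2 * w 1 + 1
  !![w 0, 0, b 2 * b 0 * w 0, b 3 * b 0 * w 0;
     0, w 1, b 2 * b 1 * w 1, b 3 * b 1 * w 1;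
     b 2 * b 0 * w 0, b 2 * b 1 * w 1, w 2 + (b 2) ^ 2 * q, b 3 * b 2 * q;
     b 3 * b 0 * w 0, b 3 * b 1 * w 1, b 3 * b 2 * q, w 3 + (b 3) ^ 2 * q]

/-- For every `θ = (β, ω) ∈ ℝ⁴ × (0,∞)⁴`, the matrix `f_Σ(θ)` is
symmetric positive definite. -/
theorem stmt5 (b w : Fin 4 → ℝ) (hw : ∀ i, 0 < w i) : (fSigma b w).PosDef := by
  have h0 := hw 0
  have h1 := hw 1
  have h2 := hw 2
  have h3 := hw 3
  rw [Matrix.posDef_iff_dotProduct_mulVec]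
  constructor
  · ext i j
    fin_cases i <;> fin_cases j <;>
      simp [fSigma, Matrix.conjTranspose_apply]
  · intro x hx
    simp only [fSigma, dotProduct, mulVec, Fin.sum_univ_four, Pi.star_apply,
      RCLike.star_def, starRingEnd_apply, star_trivial,
      Matrix.cons_val', Matrix.cons_val_zero, Matrix.cons_val_one, Matrix.head_cons,
      Matrix.empty_val', Matrix.cons_val_fin_one, Matrix.head_fin_const,
      Matrix.cons_val_two, Matrix.tail_cons, Matrix.cons_val_three,
      Matrix.vecHead, Matrix.vecTail, Function.comp, Matrix.of_apply, Matrix.cons_val_succ]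
    have key : x 0 * (w 0 * x 0 + 0 * x 1 + b 2 * b 0 * w 0 * x 2 + b 3 * b 0 * w 0 * x 3) +
        x 1 * (0 * x 0 + w 1 * x 1 + b 2 * b 1 * w 1 * x 2 + b 3 * b 1 * w 1 * x 3) +
        x 2 * (b 2 * b 0 * w 0 * x 0 + b 2 * b 1 * w 1 * x 1 +
          (w 2 + b 2 ^ 2 * (b 0 ^ 2 * w 0 + b 1 ^ 2 * w 1 + 1)) * x 2 +
          b 3 * b 2 * (b 0 ^ 2 * w 0 + b 1 ^ 2 * w 1 + 1) * x 3) +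
        x 3 * (b 3 * b 0 * w 0 * x 0 + b 3 * b 1 * w 1 * x 1 +
          b 3 * b 2 * (b 0 ^ 2 * w 0 + b 1 ^ 2 * w 1 + 1) * x 2 +
          (w 3 + b 3 ^ 2 * (b 0 ^ 2 * w 0 + b 1 ^ 2 * w 1 + 1)) * x 3) =
        w 0 * (x 0 + b 2 * b 0 * x 2 + b 3 * b 0 * x 3) ^ 2 +
        w 1 * (x 1 + b 2 * b 1 * x 2 + b 3 * b 1 * x 3) ^ 2 +
        (b 2 * x 2 + b 3 * x 3) ^ 2 + w 2 * x 2 ^ 2 + w 3 * x 3 ^ 2 := by ring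
    rw [key]
    by_contra hle
    push_neg at hle
    have sq0 : ∀ y : ℝ, y ^ 2 ≤ 0 → y = 0 := fun y hy =>
      pow_eq_zero_iff two_ne_zero |>.mp (le_antisymm hy (sq_nonneg y))
    have e2 : x 2 = 0 := by
      apply sq0
      nlinarith
    have e3 : x 3 = 0 := by
      apply sq0
      nlinarith
    rw [e2, e3] at hle
    ring_nf at hle
    have e0 : x 0 = 0 := by
      apply sq0
      nlinarith
    have e1 : x 1 = 0 := by
      apply sq0
      nlinarith
    exact hx (by ext i; fin_cases i <;> simp [e0, e1, e2, e3])
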